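/- For the Hamiltonian functions Ã(p,q) = (d + bγe^{q})p + ae^{-q} + b(αβ-γδ)e^{q} + cγ and the analogous B̃, the second Moyal bidifferential term equals P²(Ã,B̃) = -2bb'γ²e^{2q}, and P^k(Ã,B̃) = 0 for all k ≥ 3, where P^k(u,v) = Σ Λ^{i₁j₁}···Λ^{iₖjₖ} ∂^k u ∂^k v with Λ the standard symplectic 2-tensor on ℝ² (Λ^{12}=-1, Λ^{21}=1). -/

import Mathlib

/-- Partial derivative in direction p (i = 0) or q (i = 1) of a function on
ℝ² with coordinates x¹ = p, x² = q. -/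
noncomputable def pd (i : Fin 2) (u : ℝ × ℝ → ℝ) : ℝ × ℝ → ℝ :=
  fun w => fderiv ℝ u w (if i = 0 then ((1 : ℝ), (0 : ℝ)) else ((0 : ℝ), (1 : ℝ)))

/-- Iterated partial derivative ∂^k_{i₁…iₖ}. -/
noncomputable def pdSeq {k : ℕ} (is : Fin k → Fin 2) (u : ℝ × ℝ → ℝ) : ℝ × ℝ → ℝ :=
  (List.ofFn is).foldr pd u

/-- The standard symplectic 2-tensor Λ on ℝ²: Λ^{12} = -1, Λ^{21} = 1. -/
def Lam : Fin 2 → Fin 2 → ℝ :=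
  fun i j => if i = 0 ∧ j = 1 then -1 else if i = 1 ∧ j = 0 then 1 else 0

/-- The k-th Moyal bidifferential operator
P^k(u,v) = Σ Λ^{i₁j₁}···Λ^{iₖjₖ} ∂^k_{i₁…iₖ}u · ∂^k_{j₁…jₖ}v. -/
noncomputable def moyalP (k : ℕ) (u v : ℝ × ℝ → ℝ) : ℝ × ℝ → ℝ :=
  fun w => ∑ is : Fin k → Fin 2, ∑ js : Fin k → Fin 2,
    (∏ r, Lam (is r) (js r)) * pdSeq is u w * pdSeq js v w

/-- Hamiltonian function on Ω⁵: Ã(p,q) = (d+bγe^q)p + ae^{-q} + b(αβ-γδ)e^q + cγ. -/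
noncomputable def fA5 (α β γ δ a b c d : ℝ) : ℝ × ℝ → ℝ :=
  fun w => (d + b * γ * Real.exp w.2) * w.1 + a * Real.exp (-w.2)
      + b * (α * β - γ * δ) * Real.exp w.2 + c * γ

/-! ### Auxiliary machinery -/

/-- Parameters of a function of the form A·e^q·p + B·e^{-q} + C·e^q + D·p + E. -/
structure Pr where
  A : ℝ
  B : ℝ
  C : ℝ
  D : ℝ
  E : ℝ

noncomputable def PhiT (P : Pr) : ℝ × ℝ → ℝ :=
  fun w => P.A * Real.exp w.2 * w.1 + P.B * Real.exp (-w.2) + P.C * Real.exp w.2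
    + P.D * w.1 + P.E

def pstep (i : Fin 2) (P : Pr) : Pr :=
  if i = 0 then ⟨0, 0, P.A, 0, P.D⟩ else ⟨P.A, -P.B, P.C, 0, 0⟩

lemma hasF (P : Pr) (w : ℝ × ℝ) :
    HasFDerivAt (PhiT P)
      ((P.A * Real.exp w.2 + P.D) • ContinuousLinearMap.fst ℝ ℝ ℝ +
        (P.A * Real.exp w.2 * w.1 - P.B * Real.exp (-w.2) + P.C * Real.exp w.2) •
          ContinuousLinearMap.snd ℝ ℝ ℝ) w := by
  have he : HasFDerivAt (fun v : ℝ × ℝ => Real.exp v.2)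
      (Real.exp w.2 • ContinuousLinearMap.snd ℝ ℝ ℝ) w :=
    (Real.hasDerivAt_exp w.2).comp_hasFDerivAt w hasFDerivAt_snd
  have hen : HasFDerivAt (fun v : ℝ × ℝ => Real.exp (-v.2))
      (Real.exp (-w.2) • -(ContinuousLinearMap.snd ℝ ℝ ℝ)) w :=
    by
      have hn : HasFDerivAt (fun v : ℝ × ℝ => -v.2) (-(ContinuousLinearMap.snd ℝ ℝ ℝ)) w :=
        hasFDerivAt_snd.neg
      exact (Real.hasDerivAt_exp (-w.2)).comp_hasFDerivAt w hn
  have h1 := (he.const_mul P.A).mul hasFDerivAt_fst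
  have h2 : HasFDerivAt (fun v : ℝ × ℝ => P.B * Real.exp (-v.2))
      (P.B • (Real.exp (-w.2) • -(ContinuousLinearMap.snd ℝ ℝ ℝ))) w := hen.const_mul P.B
  have h3 : HasFDerivAt (fun v : ℝ × ℝ => P.C * Real.exp v.2)
      (P.C • (Real.exp w.2 • ContinuousLinearMap.snd ℝ ℝ ℝ)) w := he.const_mul P.C
  have h4 : HasFDerivAt (fun v : ℝ × ℝ => P.D * v.1)
      (P.D • (ContinuousLinearMap.fst ℝ ℝ ℝ)) w := hasFDerivAt_fst.const_mul P.D
  have h := (((h1.add h2).add h3).add h4).add_const P.E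
  refine h.congr_fderiv (Eq.symm ?_)
  refine ContinuousLinearMap.ext fun v => ?_
  simp
  ring

lemma pd_PhiT (i : Fin 2) (P : Pr) : pd i (PhiT P) = PhiT (pstep i P) := by
  funext w
  have h := (hasF P w).fderiv
  rw [pd, h]
  fin_cases i <;>
    simp [pstep, PhiT] <;> ring

lemma foldr_pd_PhiT (L : List (Fin 2)) (P : Pr) :
    L.foldr pd (PhiT P) = PhiT (L.foldr pstep P) := by
  induction L with
  | nil => rfl
  | cons i L ih => simp [List.foldr, ih, pd_PhiT]

lemma pstep_A0 (L : List (Fin 2)) (P : Pr) (h : 1 ≤ L.count 0) :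
    (L.foldr pstep P).A = 0 ∧ (L.foldr pstep P).B = 0 ∧ (L.foldr pstep P).D = 0 := by
  induction L with
  | nil => simp at h
  | cons i L ih =>
    fin_cases i
    · simp [pstep]
    · rw [List.count_cons] at h
      norm_num at h
      obtain ⟨hA, hB, hD⟩ := ih (List.count_pos_iff.mpr h)
      simp [pstep, hA, hB, hD]

lemma pstep_zero (L : List (Fin 2)) (P : Pr) (h : 2 ≤ L.count 0) :
    L.foldr pstep P = ⟨0, 0, 0, 0, 0⟩ := by
  induction L with
  | nil => simp at h
  | cons i L ih =>
    fin_cases i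
    · rw [List.count_cons] at h
      norm_num at h
      obtain ⟨hA, _, hD⟩ := pstep_A0 L P (by omega)
      simp [pstep, hA, hD]
    · rw [List.count_cons] at h
      norm_num at h
      simp [pstep, ih (by omega)]

lemma count_fin2 (L : List (Fin 2)) : L.count 0 + L.count 1 = L.length := by
  induction L with
  | nil => simp
  | cons i L ih =>
    rw [List.count_cons, List.count_cons, List.length_cons]
    fin_cases i <;> simp <;> omega

lemma fA5_eq (α β γ δ a b c d : ℝ) :
    fA5 α β γ δ a b c d = PhiT ⟨b * γ, a, b * (α * β - γ * δ), d, c * γ⟩ := by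
  funext w
  simp [fA5, PhiT]
  ring

lemma pdSeq_PhiT {k : ℕ} (is : Fin k → Fin 2) (P : Pr) :
    pdSeq is (PhiT P) = PhiT ((List.ofFn is).foldr pstep P) :=
  foldr_pd_PhiT _ _

lemma PhiT_zero : PhiT ⟨0, 0, 0, 0, 0⟩ = fun _ => (0 : ℝ) := by
  funext w; simp [PhiT]

lemma sum4 (F : (Fin 2 → Fin 2) → ℝ) :
    ∑ f, F f = F ![0, 0] + F ![0, 1] + F ![1, 0] + F ![1, 1] := by
  rw [← Equiv.sum_comp (piFinTwoEquiv fun _ : Fin 2 => Fin 2).symm F,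
    Fintype.sum_prod_type]
  simp only [Fin.sum_univ_two]
  have h : ∀ x y : Fin 2, (piFinTwoEquiv fun _ : Fin 2 => Fin 2).symm (x, y) = ![x, y] := by
    intro x y; funext r; fin_cases r <;> rfl
  rw [h, h, h, h]
  ring

lemma key2 (x y : Fin 2) (P : Pr) :
    pdSeq ![x, y] (PhiT P) = PhiT (pstep x (pstep y P)) := by
  rw [pdSeq_PhiT]
  rfl

/-- For the Hamiltonian functions Ã, B̃ on Ω⁵, P²(Ã,B̃) = -2bb'γ²e^{2q}
and P^k(Ã,B̃) = 0 for all k ≥ 3. -/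
theorem moyalP_fA5 (α β γ δ : ℝ) (hγ : γ ≠ 0) (a b c d a' b' c' d' : ℝ) :
    (moyalP 2 (fA5 α β γ δ a b c d) (fA5 α β γ δ a' b' c' d')
        = fun w => -2 * b * b' * γ ^ 2 * Real.exp (2 * w.2)) ∧
    (∀ k : ℕ, 3 ≤ k →
        moyalP k (fA5 α β γ δ a b c d) (fA5 α β γ δ a' b' c' d') = 0) := by
  set P : Pr := ⟨b * γ, a, b * (α * β - γ * δ), d, c * γ⟩ with hP
  set Q : Pr := ⟨b' * γ, a', b' * (α * β - γ * δ), d', c' * γ⟩ with hQ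
  have hfP : fA5 α β γ δ a b c d = PhiT P := fA5_eq _ _ _ _ _ _ _ _
  have hfQ : fA5 α β γ δ a' b' c' d' = PhiT Q := fA5_eq _ _ _ _ _ _ _ _
  constructor
  · funext w
    rw [moyalP, hfP, hfQ]
    rw [sum4]
    simp only [sum4, key2]
    simp only [Fin.prod_univ_two, Matrix.cons_val_zero, Matrix.cons_val_one, Matrix.head_cons]
    norm_num [Lam, pstep, PhiT, hP, hQ]
    rw [show Real.exp (2 * w.2) = Real.exp w.2 * Real.exp w.2 by
      rw [two_mul, Real.exp_add]]
    ring
  · intro k hk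
    funext w
    rw [moyalP, hfP, hfQ]
    simp only [Pi.zero_apply]
    apply Finset.sum_eq_zero
    intro is _
    apply Finset.sum_eq_zero
    intro js _
    by_cases hd : ∀ r, js r = is r + 1
    · have hjs : js = (fun x : Fin 2 => x + 1) ∘ is := funext hd
      by_cases h2 : 2 ≤ (List.ofFn is).count 0
      · have hz : pdSeq is (PhiT P) w = 0 := by
          rw [pdSeq_PhiT, pstep_zero _ _ h2, PhiT_zero]
        rw [hz]; ring
      · have hcnt : (List.ofFn js).count 0 = (List.ofFn is).count 1 := by
          rw [hjs, ← List.map_ofFn]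
          have : (0 : Fin 2) = (fun x : Fin 2 => x + 1) 1 := rfl
          rw [this]
          exact List.count_map_of_injective (List.ofFn is) (fun x : Fin 2 => x + 1) (by decide) 1
        have hlen : (List.ofFn is).length = k := List.length_ofFn
        have h2' : 2 ≤ (List.ofFn js).count 0 := by
          have := count_fin2 (List.ofFn is)
          omega
        have hz : pdSeq js (PhiT Q) w = 0 := by
          rw [pdSeq_PhiT, pstep_zero _ _ h2', PhiT_zero]
        rw [hz]; ring
    · push_neg at hd
      obtain ⟨r, hr⟩ := hd
      have : Lam (is r) (js r) = 0 := by
        have : js r = is r := by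
          revert hr; generalize is r = x; generalize js r = y; revert x y; decide
        rw [this]
        revert this; generalize is r = x; intro _
        fin_cases x <;> simp [Lam]
      rw [Finset.prod_eq_zero (Finset.mem_univ r) this]
      ring
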